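/- Let $c=(c_1,\ldots,c_d)$ be a unit vector with nonnegative entries and let $\{u_k^{(q)}\}_{k=1}^d$ be orthonormal bases of $\mathbb{R}^d$ for $q=2,\ldots,p$ with $p\ge 3$. Then the spectral norm of the $(p-1)$th order tensor $\sum_{k=1}^d c_k u_k^{(2)}\otimes\cdots\otimes u_k^{(p)}$ equals $\max_{1\le k\le d} c_k$. -/
import Mathlib


open Finset Real

/-- Inner product of a tensor of order `m` with a rank-one tensor. -/
noncomputable def tInner {m d : ℕ} (T : (Fin m → Fin d) → ℝ) (x : Fin m → Fin d → ℝ) : ℝ :=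
  ∑ i : Fin m → Fin d, T i * ∏ q, x q (i q)

/-- Membership in the unit sphere `S^{d-1}`. -/
def UnitVec {d : ℕ} (x : Fin d → ℝ) : Prop := ∑ j, x j ^ 2 = 1

/-- Tensor spectral norm: supremum of pairings with unit rank-one tensors. -/
noncomputable def specNorm {m d : ℕ} (T : (Fin m → Fin d) → ℝ) : ℝ :=
  sSup { v | ∃ x : Fin m → Fin d → ℝ, (∀ q, UnitVec (x q)) ∧ v = tInner T x }

/-- Parseval: if the rows of `u` are orthonormal, the map `x ↦ (⟨u k, x⟩)_k` preserves
the sum of squares. -/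
lemma parseval_aux {d : ℕ} (u : Fin d → Fin d → ℝ)
    (hu : ∀ k l, (∑ j, u k j * u l j) = if k = l then 1 else 0)
    (x : Fin d → ℝ) : ∑ k, (∑ j, u k j * x j) ^ 2 = ∑ j, x j ^ 2 := by
  have hcol : ∀ j j', (∑ k, u k j * u k j') = if j = j' then 1 else 0 := by
    have h1 : (Matrix.of u) * (Matrix.of u).transpose = 1 := by
      ext k l
      simpa [Matrix.mul_apply, Matrix.one_apply] using hu k l
    have h2 := mul_eq_one_comm.mp h1
    intro j j'
    have := congrFun (congrFun h2 j) j'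
    simpa [Matrix.mul_apply, Matrix.one_apply, mul_comm] using this
  calc ∑ k, (∑ j, u k j * x j) ^ 2
      = ∑ k, ∑ j, ∑ j', (u k j * x j) * (u k j' * x j') := by
        simp_rw [sq, Finset.sum_mul_sum]
    _ = ∑ j, ∑ j', (∑ k, u k j * u k j') * (x j * x j') := by
        rw [Finset.sum_comm]
        refine Finset.sum_congr rfl fun j _ => ?_
        rw [Finset.sum_comm]
        refine Finset.sum_congr rfl fun j' _ => ?_
        rw [Finset.sum_mul]
        exact Finset.sum_congr rfl fun k _ => by ring
    _ = ∑ j, x j ^ 2 := by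
        simp_rw [hcol, ite_mul, one_mul, zero_mul]
        simp [sq]

/-- If `c` is a unit vector with nonnegative entries and `u_k^{(q)}`, `q = 2,…,p`, are
orthonormal bases, then the spectral norm of the `(p-1)`-th order tensor
`∑_k c_k u_k^{(2)} ⊗ ⋯ ⊗ u_k^{(p)}` equals `max_k c_k`. -/
theorem stmt1 (p d : ℕ) (hp : 3 ≤ p) (hd : 0 < d)
    (c : Fin d → ℝ) (hc : ∀ k, 0 ≤ c k) (hcunit : ∑ k, c k ^ 2 = 1)
    (u : Fin (p - 1) → Fin d → Fin d → ℝ)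
    (hu : ∀ q k l, (∑ j, u q k j * u q l j) = if k = l then 1 else 0)
    (A : (Fin (p - 1) → Fin d) → ℝ)
    (hA : ∀ i, A i = ∑ k, c k * ∏ q, u q k (i q)) :
    specNorm A = Finset.univ.sup' ⟨⟨0, hd⟩, Finset.mem_univ _⟩ c := by
  set M := Finset.univ.sup' ⟨⟨0, hd⟩, Finset.mem_univ _⟩ c with hM
  obtain ⟨k0, -, hk0⟩ := Finset.exists_mem_eq_sup' (⟨⟨0, hd⟩, Finset.mem_univ _⟩ :
    (Finset.univ : Finset (Fin d)).Nonempty) c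
  have hMk0 : M = c k0 := hk0
  have hM0 : 0 ≤ M := hMk0 ▸ hc k0
  let q0 : Fin (p - 1) := ⟨0, by omega⟩
  let q1 : Fin (p - 1) := ⟨1, by omega⟩
  -- key rewriting of the pairing
  have key : ∀ x : Fin (p - 1) → Fin d → ℝ,
      tInner A x = ∑ k, c k * ∏ q, (∑ j, u q k j * x q j) := by
    intro x
    calc tInner A x
        = ∑ i : Fin (p - 1) → Fin d, ∑ k, c k * ∏ q, (u q k (i q) * x q (i q)) := by
          unfold tInner
          refine Finset.sum_congr rfl fun i _ => ?_
          rw [hA, Finset.sum_mul]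
          refine Finset.sum_congr rfl fun k _ => ?_
          rw [mul_assoc, ← Finset.prod_mul_distrib]
      _ = ∑ k, c k * ∑ i : Fin (p - 1) → Fin d, ∏ q, (u q k (i q) * x q (i q)) := by
          rw [Finset.sum_comm]
          simp_rw [Finset.mul_sum]
      _ = ∑ k, c k * ∏ q, ∑ j, u q k j * x q j := by
          refine Finset.sum_congr rfl fun k _ => ?_
          congr 1
          exact (Fintype.prod_sum fun q j => u q k j * x q j).symm
  -- upper bound
  have upper : ∀ v ∈ { v | ∃ x : Fin (p - 1) → Fin d → ℝ,
      (∀ q, UnitVec (x q)) ∧ v = tInner A x }, v ≤ M := by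
    rintro v ⟨x, hx, rfl⟩
    rw [key]
    set a : Fin (p - 1) → Fin d → ℝ := fun q k => ∑ j, u q k j * x q j with ha
    have ha2 : ∀ q, ∑ k, a q k ^ 2 = 1 := fun q => by
      rw [ha]; simpa using (parseval_aux (u q) (hu q) (x q)).trans (hx q)
    have habs : ∀ q k, |a q k| ≤ 1 := by
      intro q k
      rw [← sq_le_one_iff_abs_le_one]
      calc a q k ^ 2 ≤ ∑ l, a q l ^ 2 :=
            Finset.single_le_sum (f := fun l => a q l ^ 2)
              (fun l _ => sq_nonneg _) (Finset.mem_univ k)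
        _ = 1 := ha2 q
    have hq01 : q0 ≠ q1 := Fin.ne_of_val_ne (by norm_num)
    have step1 : ∀ k : Fin d, c k * ∏ q, a q k ≤ M * (|a q0 k| * |a q1 k|) := by
      intro k
      have h1 : c k * ∏ q, a q k ≤ c k * ∏ q, |a q k| := by
        apply mul_le_mul_of_nonneg_left _ (hc k)
        rw [← Finset.abs_prod]
        exact le_abs_self _
      have h2 : ∏ q, |a q k| ≤ |a q0 k| * |a q1 k| := by
        have hsplit : (∏ q ∈ ({q0, q1} : Finset (Fin (p - 1))), |a q k|) *
            ∏ q ∈ ({q0, q1} : Finset (Fin (p - 1)))ᶜ, |a q k| = ∏ q, |a q k| :=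
          Finset.prod_mul_prod_compl _ _
        rw [← hsplit, Finset.prod_pair hq01]
        refine mul_le_of_le_one_right (by positivity) ?_
        exact Finset.prod_le_one (fun q _ => abs_nonneg _) (fun q _ => habs q k)
      have h3 : c k ≤ M := Finset.le_sup' c (Finset.mem_univ k)
      calc c k * ∏ q, a q k ≤ c k * ∏ q, |a q k| := h1
        _ ≤ c k * (|a q0 k| * |a q1 k|) :=
            mul_le_mul_of_nonneg_left h2 (hc k)
        _ ≤ M * (|a q0 k| * |a q1 k|) :=
            mul_le_mul_of_nonneg_right h3 (by positivity)
    calc (∑ k, c k * ∏ q, a q k) ≤ ∑ k, M * (|a q0 k| * |a q1 k|) :=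
          Finset.sum_le_sum fun k _ => step1 k
      _ = M * ∑ k, |a q0 k| * |a q1 k| := by rw [Finset.mul_sum]
      _ ≤ M * 1 := by
          apply mul_le_mul_of_nonneg_left _ hM0
          have hcs := Finset.sum_mul_sq_le_sq_mul_sq Finset.univ
            (fun k => |a q0 k|) (fun k => |a q1 k|)
          have e0 : ∑ k, |a q0 k| ^ 2 = 1 := by simpa [sq_abs] using ha2 q0
          have e1 : ∑ k, |a q1 k| ^ 2 = 1 := by simpa [sq_abs] using ha2 q1
          rw [e0, e1, one_mul] at hcs
          nlinarith [Finset.sum_nonneg (fun k (_ : k ∈ Finset.univ) =>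
            mul_nonneg (abs_nonneg (a q0 k)) (abs_nonneg (a q1 k)))]
      _ = M := mul_one M
  -- membership: M is attained
  have hmem : M ∈ { v | ∃ x : Fin (p - 1) → Fin d → ℝ,
      (∀ q, UnitVec (x q)) ∧ v = tInner A x } := by
    refine ⟨fun q => u q k0, fun q => ?_, ?_⟩
    · show ∑ j, u q k0 j ^ 2 = 1
      simpa [sq] using hu q k0 k0
    · rw [key]
      have : ∀ k : Fin d, (∏ q, ∑ j, u q k j * u q k0 j) =
          if k = k0 then (1 : ℝ) else 0 := by
        intro k
        simp_rw [hu]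
        rcases eq_or_ne k k0 with h | h
        · simp [h]
        · simp only [h, if_false]
          rw [Finset.prod_const]
          rw [zero_pow]
          simp [Finset.card_univ]
          omega
      simp_rw [this, mul_ite, mul_one, mul_zero]
      simp [hMk0]
  -- conclude
  refine le_antisymm (Real.sSup_le upper hM0) ?_
  exact le_csSup ⟨M, upper⟩ hmem
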